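/- (Energy monotonicity of the continuous-valued quaternionic Hopfield network.) Let σ_act(q) = q/‖q‖ for nonzero quaternions q, with state set the unit sphere S = { p ∈ ℍ : ‖p‖ = 1 }. Let N ≥ 1 and let (w_ij) be an N×N quaternion matrix with w_ij = star(w_ji) for all i, j, and with each diagonal entry w_ii a nonnegative real number. For every update schedule σ : ℕ → {1,…,N} and every initial state x(0) ∈ S^N, consider the asynchronous trajectory defined by x_i(t+1) = σ_act(v_i(t)) if i = σ(t) and v_i(t) ≠ 0, and x_i(t+1) = x_i(t) otherwise, where v_i(t) = Σⱼ w_ij * x_j(t). Then the energy E(x(t)) = −(1/2) Σᵢ Σⱼ Re(star(x_i(t)) * (w_ij * x_j(t))) is nonincreasing in t, strictly decreases whenever x(t+1) ≠ x(t), and the real sequence (E(x(t)))_{t≥0} converges. -/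

import Mathlib

private lemma qre_sum {ι : Type*} (s : Finset ι) (f : ι → Quaternion ℝ) :
    (∑ j ∈ s, f j).re = ∑ j ∈ s, (f j).re := by
  classical
  induction s using Finset.induction with
  | empty => simp [Quaternion.re_zero]
  | insert _ _ h ih => simp [Finset.sum_insert h, ih]

private lemma qre_star_mul (a b : Quaternion ℝ) : (star a * b).re = (star b * a).re := by
  rw [← Quaternion.re_star (star a * b), star_mul, star_star]

private lemma qre_star_self (a : Quaternion ℝ) : (star a * a).re = ‖a‖ ^ 2 := by
  rw [Quaternion.star_mul_self, Quaternion.re_coe, Quaternion.normSq_eq_norm_mul_self, sq]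

private lemma qre_le_norm (q : Quaternion ℝ) : q.re ≤ ‖q‖ := by
  have h := real_inner_le_norm q (1 : Quaternion ℝ)
  simpa [Quaternion.inner_def] using h

theorem continuous_quaternionic_hopfield_energy_monotone
    (N : ℕ) (hN : 1 ≤ N)
    (w : Fin N → Fin N → Quaternion ℝ)
    (hsym : ∀ i j, w i j = star (w j i))
    (hdiag : ∀ i, ∃ r : ℝ, 0 ≤ r ∧ w i i = (r : Quaternion ℝ))
    (σ : ℕ → Fin N) (x : ℕ → Fin N → Quaternion ℝ)
    (hx0 : ∀ i, ‖x 0 i‖ = 1)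
    (hdyn : ∀ t i,
      ((i = σ t ∧ (∑ j, w i j * x t j) ≠ 0) →
        x (t + 1) i = ‖(∑ j, w i j * x t j)‖⁻¹ • (∑ j, w i j * x t j)) ∧
      (¬(i = σ t ∧ (∑ j, w i j * x t j) ≠ 0) →
        x (t + 1) i = x t i))
    (E : (Fin N → Quaternion ℝ) → ℝ)
    (hE : ∀ y, E y = -(1/2 : ℝ) * ∑ i, ∑ j, (star (y i) * (w i j * y j)).re) :
    (∀ t, E (x (t + 1)) ≤ E (x t)) ∧
    (∀ t, x (t + 1) ≠ x t → E (x (t + 1)) < E (x t)) ∧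
    (∃ L : ℝ, Filter.Tendsto (fun t => E (x t)) Filter.atTop (nhds L)) := by
  -- all states stay on the unit sphere
  have hnorm : ∀ t i, ‖x t i‖ = 1 := by
    intro t
    induction t with
    | zero => exact hx0
    | succ t ih =>
      intro i
      by_cases hc : i = σ t ∧ (∑ j, w i j * x t j) ≠ 0
      · rw [(hdyn t i).1 hc, norm_smul, norm_inv, norm_norm,
          inv_mul_cancel₀ (norm_ne_zero_iff.mpr hc.2)]
      · rw [(hdyn t i).2 hc]; exact ih i
  have key : ∀ t, E (x (t+1)) ≤ E (x t) ∧ (x (t+1) ≠ x t → E (x (t+1)) < E (x t)) := by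
    intro t
    by_cases hv0 : (∑ j, w (σ t) j * x t j) = 0
    · have hall : x (t+1) = x t := by
        funext i
        refine (hdyn t i).2 ?_
        rintro ⟨hik, hne⟩
        exact hne (hik ▸ hv0)
      exact ⟨le_of_eq (by rw [hall]), fun h => absurd hall h⟩
    · set k := σ t with hkdef
      set v : Quaternion ℝ := ∑ j, w k j * x t j with hvdef
      have hyk : x (t+1) k = ‖v‖⁻¹ • v := (hdyn t k).1 ⟨rfl, hv0⟩
      have hyo : ∀ i, i ≠ k → x (t+1) i = x t i :=
        fun i hi => (hdyn t i).2 (fun hc => hi hc.1)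
      set d : Quaternion ℝ := x (t+1) k - x t k with hddef
      set D : Fin N → Quaternion ℝ := fun i => if i = k then d else 0 with hDdef
      have hDk : D k = d := by simp [hDdef]
      have hxD : ∀ i, x (t+1) i = x t i + D i := by
        intro i
        by_cases hi : i = k
        · subst hi; simp [hDk, hddef]
        · simp [hDdef, hi, hyo i hi]
      obtain ⟨r, hr0, hwkk⟩ := hdiag k
      set c : ℝ := (star (x t k) * v).re with hcdef
      have hnk : ‖x t k‖ = 1 := hnorm t k
      have hnk' : ‖x (t+1) k‖ = 1 := hnorm (t+1) k
      have hvne : ‖v‖ ≠ 0 := norm_ne_zero_iff.mpr hv0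
      -- cross term computations
      have e2 : (star (x t k) * x (t+1) k).re = ‖v‖⁻¹ * c := by
        rw [hyk, mul_smul_comm]
        simp [hcdef]
      have hd2 : ‖d‖ ^ 2 = 2 - 2 * (‖v‖⁻¹ * c) := by
        have e1 : star d * d = star (x (t+1) k) * x (t+1) k - star (x (t+1) k) * x t k
            - star (x t k) * x (t+1) k + star (x t k) * x t k := by
          rw [hddef, star_sub]; noncomm_ring
        have e3 : (star (x (t+1) k) * x t k).re = ‖v‖⁻¹ * c := by
          rw [qre_star_mul]; exact e2
        have := qre_star_self d
        rw [e1] at this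
        simp only [Quaternion.re_add, Quaternion.re_sub] at this
        rw [qre_star_self, qre_star_self, hnk, hnk', e2, e3] at this
        rw [← this]; ring
      have hdv : (star d * v).re = ‖v‖ - c := by
        have e1 : star d * v = star (x (t+1) k) * v - star (x t k) * v := by
          rw [hddef, star_sub]; noncomm_ring
        have e4 : (star (x (t+1) k) * v).re = ‖v‖ := by
          rw [qre_star_mul, hyk, mul_smul_comm, Quaternion.re_smul, smul_eq_mul,
            qre_star_self, sq, inv_mul_cancel_left₀ hvne]
        rw [e1]
        simp only [Quaternion.re_sub, e4, hcdef]
      have hrel : ‖v‖ - c = ‖v‖ * ‖d‖ ^ 2 / 2 := by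
        rw [hd2]; field_simp
      -- the sum expansion
      have hpt : ∀ i j, (star (x (t+1) i) * (w i j * x (t+1) j)).re
          = (star (x t i) * (w i j * x t j)).re + (star (D i) * (w i j * x t j)).re
            + (star (x t i) * (w i j * D j)).re + (star (D i) * (w i j * D j)).re := by
        intro i j
        rw [hxD i, hxD j]
        have : star (x t i + D i) * (w i j * (x t j + D j)) =
            star (x t i) * (w i j * x t j) + star (D i) * (w i j * x t j)
            + star (x t i) * (w i j * D j) + star (D i) * (w i j * D j) := by
          rw [star_add]; noncomm_ring
        rw [this]
        simp [Quaternion.re_add]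
      have hT1 : (∑ i, ∑ j, (star (D i) * (w i j * x t j)).re) = (star d * v).re := by
        rw [Finset.sum_eq_single k]
        · calc ∑ j, (star (D k) * (w k j * x t j)).re
              = ∑ j, (star d * (w k j * x t j)).re := by rw [hDk]
            _ = (∑ j, star d * (w k j * x t j)).re := (qre_sum _ _).symm
            _ = (star d * v).re := by rw [hvdef, Finset.mul_sum]
        · intro b _ hb
          simp [hDdef, hb, Quaternion.re_zero]
        · intro h; exact absurd (Finset.mem_univ k) h
      have hT2 : (∑ i, ∑ j, (star (x t i) * (w i j * D j)).re) = (star d * v).re := by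
        have hinner : ∀ i : Fin N, (∑ j, (star (x t i) * (w i j * D j)).re)
            = (star d * (w k i * x t i)).re := by
          intro i
          rw [Finset.sum_eq_single k]
          · rw [hDk, qre_star_mul, star_mul, ← hsym k i, mul_assoc]
          · intro b _ hb; simp [hDdef, hb, Quaternion.re_zero]
          · intro h; exact absurd (Finset.mem_univ k) h
        calc ∑ i, ∑ j, (star (x t i) * (w i j * D j)).re
            = ∑ i, (star d * (w k i * x t i)).re := by
              exact Finset.sum_congr rfl (fun i _ => hinner i)
          _ = (∑ i, star d * (w k i * x t i)).re := (qre_sum _ _).symm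
          _ = (star d * v).re := by rw [hvdef, Finset.mul_sum]
      have hT3 : (∑ i, ∑ j, (star (D i) * (w i j * D j)).re) = r * ‖d‖ ^ 2 := by
        rw [Finset.sum_eq_single k]
        · rw [Finset.sum_eq_single k]
          · rw [hDk, hwkk, Quaternion.coe_mul_eq_smul, mul_smul_comm,
              Quaternion.re_smul, smul_eq_mul, qre_star_self]
          · intro b _ hb; simp [hDdef, hb, Quaternion.re_zero]
          · intro h; exact absurd (Finset.mem_univ k) h
        · intro b _ hb; simp [hDdef, hb, Quaternion.re_zero]
        · intro h; exact absurd (Finset.mem_univ k) h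
      have hSdiff : (∑ i, ∑ j, (star (x (t+1) i) * (w i j * x (t+1) j)).re)
          = (∑ i, ∑ j, (star (x t i) * (w i j * x t j)).re)
            + 2 * (star d * v).re + r * ‖d‖ ^ 2 := by
        calc (∑ i, ∑ j, (star (x (t+1) i) * (w i j * x (t+1) j)).re)
            = ∑ i, ∑ j, ((star (x t i) * (w i j * x t j)).re
                + (star (D i) * (w i j * x t j)).re
                + (star (x t i) * (w i j * D j)).re
                + (star (D i) * (w i j * D j)).re) := by
              exact Finset.sum_congr rfl fun i _ =>
                Finset.sum_congr rfl fun j _ => hpt i j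
          _ = (∑ i, ∑ j, (star (x t i) * (w i j * x t j)).re)
              + (∑ i, ∑ j, (star (D i) * (w i j * x t j)).re)
              + (∑ i, ∑ j, (star (x t i) * (w i j * D j)).re)
              + (∑ i, ∑ j, (star (D i) * (w i j * D j)).re) := by
              simp only [Finset.sum_add_distrib]
          _ = _ := by rw [hT1, hT2, hT3]; ring
      have hEdiff : E (x (t+1)) = E (x t) - (‖v‖ + r) / 2 * ‖d‖ ^ 2 := by
        rw [hE, hE, hSdiff, hdv, hrel]; ring
      constructor
      · have h0 : 0 ≤ (‖v‖ + r) / 2 * ‖d‖ ^ 2 := by positivity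
        rw [hEdiff]; linarith
      · intro hne
        have hdne : d ≠ 0 := by
          intro h0
          apply hne; funext i
          by_cases hi : i = k
          · subst hi
            rw [hddef] at h0
            exact sub_eq_zero.mp h0
          · exact hyo i hi
        have h1 : 0 < ‖v‖ := lt_of_le_of_ne (norm_nonneg v) (Ne.symm hvne)
        have h2 : 0 < ‖d‖ ^ 2 := pow_pos (norm_pos_iff.mpr hdne) 2
        have h3 : 0 < (‖v‖ + r) / 2 * ‖d‖ ^ 2 := by
          apply mul_pos _ h2; linarith
        rw [hEdiff]; linarith
  refine ⟨fun t => (key t).1, fun t => (key t).2, ?_⟩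
  have hanti : Antitone (fun t => E (x t)) :=
    antitone_nat_of_succ_le (fun t => (key t).1)
  have hbdd : BddBelow (Set.range fun t => E (x t)) := by
    refine ⟨-(1/2) * ∑ i, ∑ j : Fin N, ‖w i j‖, ?_⟩
    rintro _ ⟨t, rfl⟩
    show -(1/2 : ℝ) * (∑ i, ∑ j : Fin N, ‖w i j‖) ≤ E (x t)
    rw [hE]
    have hb : ∀ i j, (star (x t i) * (w i j * x t j)).re ≤ ‖w i j‖ := by
      intro i j
      calc (star (x t i) * (w i j * x t j)).re
          ≤ ‖star (x t i) * (w i j * x t j)‖ := qre_le_norm _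
        _ = ‖w i j‖ := by
            rw [norm_mul, norm_star, norm_mul, hnorm, hnorm]; ring
    have hsum : ∑ i, ∑ j, (star (x t i) * (w i j * x t j)).re
        ≤ ∑ i, ∑ j : Fin N, ‖w i j‖ :=
      Finset.sum_le_sum (fun i _ => Finset.sum_le_sum (fun j _ => hb i j))
    linarith
  exact ⟨_, tendsto_atTop_ciInf hanti hbdd⟩
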